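/- Let κ be an uncountable regular cardinal. If there exists a ◇*(κ)-sequence, then there exists a strongly independent family on κ of cardinality 2^κ, i.e., a family 𝓘 ⊆ 𝒫(κ) with |𝓘| = 2^κ such that for every partial function h : 𝓘 ⇀ 2 with |dom(h)| < κ, the set ⋂_{I∈dom(h)} I^{h(I)} has cardinality κ (where I^0 = I, I^1 = κ∖I). -/

import Mathlib

open Cardinal
open scoped symmDiff

/-- `C` is a club (closed unbounded) subset of the ordinal `o`. -/
def IsClubIn (C : Set Ordinal) (o : Ordinal) : Prop :=
  C ⊆ Set.Iio o ∧ (∀ a < o, ∃ b ∈ C, a ≤ b) ∧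
    (∀ a < o, a ≠ 0 → (∀ b < a, ∃ c ∈ C, b < c ∧ c < a) → a ∈ C)

/-- `S` is a `◇*(κ)`-sequence. -/
def IsDiamondStarSeq (κ : Cardinal.{0}) (S : Ordinal.{0} → Set (Set Ordinal.{0})) : Prop :=
  (∀ α < κ.ord, (∀ x ∈ S α, x ⊆ Set.Iio α) ∧ #(S α) < Cardinal.lift.{1} κ) ∧
    ∀ X ⊆ Set.Iio κ.ord, ∃ C, IsClubIn C κ.ord ∧ ∀ α ∈ C, X ∩ Set.Iio α ∈ S α

namespace DiamondStarAux

variable {κ : Cardinal.{0}}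

lemma isRegular_lift (hreg : κ.IsRegular) : (Cardinal.lift.{1} κ).IsRegular :=
  ⟨Cardinal.aleph0_le_lift.mpr hreg.1, by
    rw [← Cardinal.lift_ord, ← Ordinal.lift_cof, hreg.cof_eq]⟩

lemma mk_Iio_ord : #(Set.Iio κ.ord) = Cardinal.lift.{1} κ := by
  rw [Ordinal.mk_Iio_ordinal, Cardinal.card_ord]

lemma bounded_of_small (hreg : κ.IsRegular) (B : Set Ordinal.{0})
    (hB : B ⊆ Set.Iio κ.ord) (hsz : #B < Cardinal.lift.{1} κ) :
    ∃ γ < κ.ord, ∀ β ∈ B, β < γ := by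
  by_contra hcon
  push_neg at hcon
  have hcov : Set.Iio κ.ord ⊆ ⋃ (β : B), Set.Iic (β : Ordinal) := by
    intro a ha
    obtain ⟨β, hβ, hle⟩ := hcon a ha
    exact Set.mem_iUnion.mpr ⟨⟨β, hβ⟩, hle⟩
  have h1 : Cardinal.lift.{1} κ ≤ #(⋃ (β : B), Set.Iic (β : Ordinal)) := by
    rw [← mk_Iio_ord]; exact mk_le_mk_of_subset hcov
  have h2 : #(⋃ (β : B), Set.Iic (β : Ordinal)) < Cardinal.lift.{1} κ := by
    apply (mk_iUnion_le _).trans_lt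
    apply Cardinal.mul_lt_of_lt (isRegular_lift hreg).aleph0_le hsz
    apply Cardinal.iSup_lt_of_isRegular (isRegular_lift hreg) hsz
    intro β
    have hs : Order.succ (β : Ordinal) < κ.ord :=
      (Cardinal.isSuccLimit_ord hreg.aleph0_le).succ_lt (hB β.2)
    have hIic : #(Set.Iic (β : Ordinal)) = Cardinal.lift.{1} (Order.succ (β : Ordinal)).card := by
      rw [← Order.Iio_succ, Ordinal.mk_Iio_ordinal]
    rw [hIic, ← Cardinal.card_ord κ]
    exact Cardinal.lift_lt.mpr (by rw [Cardinal.card_ord]; exact Cardinal.lt_ord.mp hs)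
  exact (h1.trans_lt h2).false

lemma large_of_unbounded (hreg : κ.IsRegular) (B : Set Ordinal.{0})
    (hB : B ⊆ Set.Iio κ.ord) (hub : ∀ a < κ.ord, ∃ β ∈ B, a ≤ β) :
    Cardinal.lift.{1} κ ≤ #B := by
  by_contra h
  push_neg at h
  obtain ⟨γ, hγ, hlt⟩ := bounded_of_small hreg B hB h
  obtain ⟨β, hβ, hle⟩ := hub γ hγ
  exact absurd hle (not_le.mpr (hlt β hβ))

lemma exists_in_clubs (hreg : κ.IsRegular) (hu : ℵ₀ < κ) (𝒞 : Set (Set Ordinal.{0}))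
    (hsz : #𝒞 < Cardinal.lift.{1} κ) (hc : ∀ C ∈ 𝒞, IsClubIn C κ.ord) :
    ∀ a < κ.ord, ∃ b, a < b ∧ b < κ.ord ∧ ∀ C ∈ 𝒞, b ∈ C := by
  have hlim := Cardinal.isSuccLimit_ord hreg.aleph0_le
  have step : ∀ x < κ.ord, ∃ y, x < y ∧ y < κ.ord ∧ ∀ C ∈ 𝒞, ∃ c ∈ C, x < c ∧ c < y := by
    intro x hx
    have hx1 : Order.succ x < κ.ord := hlim.succ_lt hx
    choose g hg1 hg2 using fun C : 𝒞 => (hc C C.2).2.1 (Order.succ x) hx1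
    have hBsub : Set.range g ⊆ Set.Iio κ.ord := by
      rintro _ ⟨C, rfl⟩
      exact (hc C C.2).1 (hg1 C)
    obtain ⟨γ, hγκ, hγ⟩ := bounded_of_small hreg (Set.range g) hBsub
      (mk_range_le.trans_lt hsz)
    refine ⟨max γ (Order.succ x), lt_of_lt_of_le (Order.lt_succ x) (le_max_right _ _),
      max_lt hγκ hx1, ?_⟩
    intro C hC
    refine ⟨g ⟨C, hC⟩, hg1 ⟨C, hC⟩, lt_of_lt_of_le (Order.lt_succ x) (hg2 ⟨C, hC⟩), ?_⟩
    exact lt_of_lt_of_le (hγ _ (Set.mem_range_self _)) (le_max_left _ _)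
  intro a ha
  have step' : ∀ x : Set.Iio κ.ord,
      ∃ y : Set.Iio κ.ord, (x : Ordinal) < y ∧ ∀ C ∈ 𝒞, ∃ c ∈ C, (x : Ordinal) < c ∧ c < y := by
    intro x
    obtain ⟨y, h1, h2, h3⟩ := step x x.2
    exact ⟨⟨y, h2⟩, h1, h3⟩
  choose g hg1 hg2 using step'
  have ha1 : Order.succ a < κ.ord := hlim.succ_lt ha
  set sq : ℕ → Set.Iio κ.ord := fun n => g^[n] ⟨Order.succ a, ha1⟩ with hsq
  have hsq_succ : ∀ n, sq (n + 1) = g (sq n) := fun n => Function.iterate_succ_apply' g n _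
  set b : Ordinal := ⨆ n, (sq n : Ordinal) with hb
  have hbdd : BddAbove (Set.range fun n => (sq n : Ordinal)) := Ordinal.bddAbove_range _
  have hble : ∀ n, (sq n : Ordinal) ≤ b := fun n => le_ciSup hbdd n
  have hblt : b < κ.ord := by
    apply Ordinal.iSup_lt_ord _ (fun n => (sq n).2)
    rw [Cardinal.mk_nat, hreg.cof_eq]
    exact hu
  have hab : a < b := lt_of_lt_of_le (Order.lt_succ a) (hble 0)
  refine ⟨b, hab, hblt, ?_⟩
  intro C hC
  apply (hc C hC).2.2 b hblt (pos_iff_ne_zero.mp (lt_of_le_of_lt (zero_le (a := a)) hab))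
  intro x hxb
  have hex : ∃ n, x < (sq n : Ordinal) := by
    by_contra hcon
    push_neg at hcon
    exact absurd (ciSup_le hcon : b ≤ x) (not_le.mpr hxb)
  obtain ⟨n, hn⟩ := hex
  obtain ⟨c, hcC, hc1, hc2⟩ := hg2 (sq n) C hC
  refine ⟨c, hcC, hn.trans hc1, ?_⟩
  calc c < (g (sq n) : Ordinal) := hc2
    _ = (sq (n + 1) : Ordinal) := by rw [hsq_succ]
    _ ≤ b := hble (n + 1)

lemma two_pow_le (hreg : κ.IsRegular) {S : Ordinal.{0} → Set (Set Ordinal.{0})}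
    (hS : IsDiamondStarSeq κ S) :
    ∀ μ : Cardinal.{1}, μ < Cardinal.lift.{1} κ → (2 : Cardinal.{1}) ^ μ ≤ Cardinal.lift.{1} κ := by
  have hne : Nonempty (Set.Iio κ.ord) := ⟨⟨0, hreg.ord_pos⟩⟩
  have hU : #(⋃ α : Set.Iio κ.ord, S α) ≤ Cardinal.lift.{1} κ := by
    apply (mk_iUnion_le _).trans
    rw [mk_Iio_ord]
    calc Cardinal.lift.{1} κ * ⨆ α : Set.Iio κ.ord, #(S (α : Ordinal)) ≤
        Cardinal.lift.{1} κ * Cardinal.lift.{1} κ :=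
        mul_le_mul' le_rfl (ciSup_le fun α => ((hS.1 α α.2).2).le)
      _ = Cardinal.lift.{1} κ := Cardinal.mul_eq_self (Cardinal.aleph0_le_lift.mpr hreg.1)
  intro μ hμ
  obtain ⟨μ₀, hμ₀, hlift⟩ := Cardinal.lt_lift_iff.mp hμ
  set δ : Ordinal := μ₀.ord with hδdef
  have hδ : δ < κ.ord := Cardinal.ord_lt_ord.mpr hμ₀
  have hmk : #(Set.Iio δ) = μ := by rw [Ordinal.mk_Iio_ordinal, Cardinal.card_ord, hlift]
  rw [← hmk, ← mk_powerset]
  have hmem : ∀ X : ↥(𝒫 (Set.Iio δ)), (X : Set Ordinal) ∈ ⋃ α : Set.Iio κ.ord, S α := by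
    intro X
    have hXδ : (X : Set Ordinal) ⊆ Set.Iio δ := X.2
    obtain ⟨C, hCc, hCm⟩ := hS.2 (X : Set Ordinal) (hXδ.trans (Set.Iio_subset_Iio hδ.le))
    obtain ⟨α, hαC, hδα⟩ := hCc.2.1 δ hδ
    have hα : α < κ.ord := hCc.1 hαC
    have hXα : (X : Set Ordinal) ∩ Set.Iio α = X :=
      Set.inter_eq_left.mpr (hXδ.trans (Set.Iio_subset_Iio hδα))
    exact Set.mem_iUnion.mpr ⟨⟨α, hα⟩, by rw [← hXα]; exact hCm α hαC⟩
  refine le_trans (mk_le_of_injective (f := fun X : ↥(𝒫 (Set.Iio δ)) =>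
    (⟨(X : Set Ordinal), hmem X⟩ : ↥(⋃ α : Set.Iio κ.ord, S α))) ?_) hU
  intro X Y h
  have h2 := Subtype.ext_iff.mp h
  exact Subtype.ext h2

end DiamondStarAux

/-- The base set of pairs `(α, 𝒜)` with `α < κ.ord` and `𝒜 ⊆ S α`. -/
def DiamondStarAux.Tset (κ : Cardinal.{0}) (S : Ordinal.{0} → Set (Set Ordinal.{0})) :
    Set (Ordinal.{0} × Set (Set Ordinal.{0})) :=
  {p | p.1 < κ.ord ∧ p.2 ⊆ S p.1}

namespace DiamondStarAux

lemma mk_Tset (hreg : κ.IsRegular) {S : Ordinal.{0} → Set (Set Ordinal.{0})}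
    (hS : IsDiamondStarSeq κ S) : #(Tset κ S) = Cardinal.lift.{1} κ := by
  have hne : Nonempty (Set.Iio κ.ord) := ⟨⟨0, hreg.ord_pos⟩⟩
  apply le_antisymm
  · have hsub : Tset κ S ⊆ ⋃ α : Set.Iio κ.ord,
        (fun 𝒜 => ((α : Ordinal), 𝒜)) '' 𝒫 (S (α : Ordinal)) := by
      rintro ⟨α, 𝒜⟩ ⟨h1, h2⟩
      exact Set.mem_iUnion.mpr ⟨⟨α, h1⟩, Set.mem_image_of_mem _ h2⟩
    apply (mk_le_mk_of_subset hsub).trans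
    apply (mk_iUnion_le _).trans
    rw [mk_Iio_ord]
    calc Cardinal.lift.{1} κ *
        ⨆ α : Set.Iio κ.ord, #((fun 𝒜 => ((α : Ordinal), 𝒜)) '' 𝒫 (S (α : Ordinal)))
        ≤ Cardinal.lift.{1} κ * Cardinal.lift.{1} κ := by
          apply mul_le_mul' le_rfl
          apply ciSup_le
          intro α
          refine mk_image_le.trans ?_
          rw [mk_powerset]
          exact two_pow_le hreg hS _ ((hS.1 α α.2).2)
      _ = _ := Cardinal.mul_eq_self (Cardinal.aleph0_le_lift.mpr hreg.1)
  · rw [← mk_Iio_ord]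
    apply mk_le_of_injective (f := fun α : Set.Iio κ.ord =>
      (⟨((α : Ordinal), ∅), α.2, Set.empty_subset _⟩ : Tset κ S))
    intro x y h
    exact Subtype.ext ((Prod.mk.injEq _ _ _ _).mp (congrArg Subtype.val h)).1

end DiamondStarAux

open DiamondStarAux

/-- if `κ` is uncountable regular and a `◇*(κ)`-sequence exists, then
there is a strongly independent family on `κ` (identified with `Set.Iio κ.ord`)
of cardinality `2^κ`: every Boolean combination of length `< κ` has size `κ`.
Here `I^0 = I` (sign `false`) and `I^1 = κ ∖ I` (sign `true`). -/
theorem diamondStar_implies_strongly_independent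
    (κ : Cardinal.{0}) (hreg : κ.IsRegular) (hu : ℵ₀ < κ)
    (S : Ordinal.{0} → Set (Set Ordinal.{0})) (hS : IsDiamondStarSeq κ S) :
    ∃ 𝓘 : Set (Set Ordinal.{0}), (∀ I ∈ 𝓘, I ⊆ Set.Iio κ.ord) ∧
      #𝓘 = Cardinal.lift.{1} (2 ^ κ) ∧
      ∀ D ⊆ 𝓘, #D < Cardinal.lift.{1} κ → ∀ f : Set Ordinal.{0} → Bool,
        #(↥(Set.Iio κ.ord ∩ ⋂ I ∈ D, (if f I then Set.Iio κ.ord \ I else I)))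
          = Cardinal.lift.{1} κ := by
  classical
  obtain ⟨e⟩ : Nonempty (↥(Tset κ S) ≃ ↥(Set.Iio κ.ord)) :=
    Cardinal.eq.mp (by rw [mk_Tset hreg hS, mk_Iio_ord])
  set J : Set Ordinal.{0} → Set Ordinal.{0} := fun X =>
    Subtype.val '' (e '' {p : ↥(Tset κ S) | X ∩ Set.Iio p.val.1 ∈ p.val.2}) with hJ
  have mem_J : ∀ (X : Set Ordinal.{0}) (p : ↥(Tset κ S)),
      ((e p : Set.Iio κ.ord) : Ordinal) ∈ J X ↔ X ∩ Set.Iio p.val.1 ∈ p.val.2 := by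
    intro X p
    simp only [hJ]
    rw [Subtype.coe_injective.mem_set_image, e.injective.mem_set_image]
    rfl
  have hJsub : ∀ X, J X ⊆ Set.Iio κ.ord := by
    intro X x hx
    obtain ⟨y, -, rfl⟩ := hx
    exact y.2
  have hinj : Set.InjOn J {X : Set Ordinal.{0} | X ⊆ Set.Iio κ.ord} := by
    intro X hX Y hY hXY
    by_contra hne
    obtain ⟨β, hβ⟩ := Set.symmDiff_nonempty.mpr hne
    have hβκ : β < κ.ord := by
      rcases Set.mem_symmDiff.mp hβ with ⟨h, -⟩ | ⟨h, -⟩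
      exacts [hX h, hY h]
    obtain ⟨CX, hCX, hCXm⟩ := hS.2 X hX
    obtain ⟨CY, hCY, hCYm⟩ := hS.2 Y hY
    have hc : ∀ C ∈ ({CX, CY} : Set (Set Ordinal.{0})), IsClubIn C κ.ord := by
      rintro C (rfl | rfl) <;> assumption
    have hsz : #({CX, CY} : Set (Set Ordinal.{0})) < Cardinal.lift.{1} κ :=
      lt_of_lt_of_le ((Set.finite_singleton CY).insert CX).lt_aleph0
        (Cardinal.aleph0_le_lift.mpr hreg.1)
    obtain ⟨b, hβb, hbκ, hball⟩ := exists_in_clubs hreg hu _ hsz hc β hβκ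
    have hXb : X ∩ Set.Iio b ∈ S b := hCXm b (hball CX (Set.mem_insert _ _))
    set p : ↥(Tset κ S) := ⟨(b, {X ∩ Set.Iio b}), hbκ, Set.singleton_subset_iff.mpr hXb⟩
      with hp
    have h1 : ((e p : Set.Iio κ.ord) : Ordinal) ∈ J X := (mem_J X p).mpr rfl
    have h2 : ((e p : Set.Iio κ.ord) : Ordinal) ∉ J Y := by
      intro hmem
      have heq : Y ∩ Set.Iio b = X ∩ Set.Iio b := (mem_J Y p).mp hmem
      rcases Set.mem_symmDiff.mp hβ with ⟨h1', h2'⟩ | ⟨h1', h2'⟩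
      · have hmm : β ∈ X ∩ Set.Iio b := ⟨h1', hβb⟩
        rw [← heq] at hmm
        exact h2' hmm.1
      · have hmm : β ∈ Y ∩ Set.Iio b := ⟨h1', hβb⟩
        rw [heq] at hmm
        exact h2' hmm.1
    rw [hXY] at h1
    exact h2 h1
  refine ⟨J '' {X : Set Ordinal.{0} | X ⊆ Set.Iio κ.ord}, ?_, ?_, ?_⟩
  · rintro I ⟨X, hX, rfl⟩
    exact hJsub X
  · rw [Cardinal.mk_image_eq_of_injOn J _ hinj]
    have hps : {X : Set Ordinal.{0} | X ⊆ Set.Iio κ.ord} = 𝒫 (Set.Iio κ.ord) := rfl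
    rw [hps, mk_powerset, mk_Iio_ord]
    exact (Cardinal.lift_two_power κ).symm
  · intro D hD hDsz f
    have hw : ∀ I : ↥D, ∃ X, X ⊆ Set.Iio κ.ord ∧ J X = (I : Set Ordinal.{0}) := by
      intro I
      obtain ⟨X, hX, hJX⟩ := hD I.2
      exact ⟨X, hX, hJX⟩
    choose χ hχ1 hχ2 using hw
    choose Cl hCl1 hCl2 using fun I : ↥D => hS.2 (χ I) (hχ1 I)
    have h𝒞sz : #(Set.range Cl) < Cardinal.lift.{1} κ := mk_range_le.trans_lt hDsz
    have h𝒞c : ∀ C ∈ Set.range Cl, IsClubIn C κ.ord := by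
      rintro C ⟨I, rfl⟩; exact hCl1 I
    have hsepex : ∀ q : ↥D × ↥D, ∃ β, β < κ.ord ∧
        (χ q.1 ≠ χ q.2 → β ∈ (χ q.1) ∆ (χ q.2)) := by
      intro q
      by_cases h : χ q.1 = χ q.2
      · exact ⟨0, hreg.ord_pos, fun h' => absurd h h'⟩
      · obtain ⟨β, hβ⟩ := Set.symmDiff_nonempty.mpr h
        refine ⟨β, ?_, fun _ => hβ⟩
        rcases Set.mem_symmDiff.mp hβ with ⟨hm, -⟩ | ⟨hm, -⟩
        exacts [hχ1 q.1 hm, hχ1 q.2 hm]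
    choose sep hsep1 hsep2 using hsepex
    have hBsz : #(Set.range sep) < Cardinal.lift.{1} κ := by
      apply mk_range_le.trans_lt
      rw [Cardinal.mk_prod]
      simp only [Cardinal.lift_id]
      exact Cardinal.mul_lt_of_lt (Cardinal.aleph0_le_lift.mpr hreg.1) hDsz hDsz
    obtain ⟨γ, hγκ, hγ⟩ := bounded_of_small hreg (Set.range sep)
      (by rintro _ ⟨q, rfl⟩; exact hsep1 q) hBsz
    set A : Set Ordinal.{0} :=
      {α | α < κ.ord ∧ γ < α ∧ ∀ C ∈ Set.range Cl, α ∈ C} with hA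
    have hAub : ∀ a < κ.ord, ∃ α ∈ A, a ≤ α := by
      intro a ha
      obtain ⟨b, hb1, hb2, hb3⟩ := exists_in_clubs hreg hu _ h𝒞sz h𝒞c (max a γ)
        (max_lt ha hγκ)
      exact ⟨b, ⟨hb2, lt_of_le_of_lt (le_max_right a γ) hb1, hb3⟩,
        ((le_max_left a γ).trans hb1.le)⟩
    have hAbig : Cardinal.lift.{1} κ ≤ #A :=
      large_of_unbounded hreg A (fun α hα => hα.1) hAub
    have hpt : ∀ α : ↥A,
        (((α : Ordinal)), {Y | ∃ I : ↥D, f (I : Set Ordinal.{0}) = false ∧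
          Y = χ I ∩ Set.Iio (α : Ordinal)}) ∈ Tset κ S := by
      intro α
      refine ⟨α.2.1, ?_⟩
      rintro Y ⟨I, hfI, rfl⟩
      exact hCl2 I (α : Ordinal) (α.2.2.2 (Cl I) (Set.mem_range_self I))
    have hmemG : ∀ α : ↥A, ((e ⟨_, hpt α⟩ : Set.Iio κ.ord) : Ordinal) ∈
        Set.Iio κ.ord ∩ ⋂ I ∈ D, (if f I then Set.Iio κ.ord \ I else I) := by
      intro α
      refine ⟨(e ⟨_, hpt α⟩).2, ?_⟩
      apply Set.mem_iInter₂.mpr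
      intro I hI
      set I' : ↥D := ⟨I, hI⟩ with hI'
      have hχ2' : J (χ I') = I := hχ2 I'
      by_cases hf : f I = true
      · rw [if_pos hf]
        refine ⟨(e ⟨_, hpt α⟩).2, ?_⟩
        rw [← hχ2']
        intro hmem
        obtain ⟨I'', hf'', heq⟩ := (mem_J (χ I') _).mp hmem
        have hne : χ I' ≠ χ I'' := by
          intro h
          have hII : (I : Set Ordinal.{0}) = (I'' : Set Ordinal.{0}) := by
            rw [← hχ2', h]
            exact hχ2 I''
          rw [hII, hf''] at hf
          exact Bool.false_ne_true hf
        have hβ := hsep2 (I', I'') hne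
        have hβα : sep (I', I'') < (α : Ordinal) :=
          (hγ _ (Set.mem_range_self _)).trans α.2.2.1
        rcases Set.mem_symmDiff.mp hβ with ⟨h1, h2⟩ | ⟨h1, h2⟩
        · have hmm : sep (I', I'') ∈ χ I' ∩ Set.Iio (α : Ordinal) := ⟨h1, hβα⟩
          rw [heq] at hmm
          exact h2 hmm.1
        · have hmm : sep (I', I'') ∈ χ I'' ∩ Set.Iio (α : Ordinal) := ⟨h1, hβα⟩
          rw [← heq] at hmm
          exact h2 hmm.1
      · rw [if_neg hf, ← hχ2']
        exact (mem_J (χ I') _).mpr ⟨I', Bool.eq_false_iff.mpr hf, rfl⟩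
    apply le_antisymm
    · rw [← mk_Iio_ord]
      exact mk_le_mk_of_subset Set.inter_subset_left
    · refine hAbig.trans (mk_le_of_injective (f := fun α : ↥A =>
        (⟨((e ⟨_, hpt α⟩ : Set.Iio κ.ord) : Ordinal), hmemG α⟩ :
          ↥(Set.Iio κ.ord ∩ ⋂ I ∈ D, (if f I then Set.Iio κ.ord \ I else I)))) ?_)
      intro x y h
      have h1 := Subtype.ext_iff.mp h
      have h2 : e ⟨_, hpt x⟩ = e ⟨_, hpt y⟩ := Subtype.coe_injective h1
      have h3 := e.injective h2
      have h4 := Subtype.ext_iff.mp h3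
      exact Subtype.ext ((Prod.mk.injEq _ _ _ _).mp h4).1
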